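/- If {u,v} is an edge of P_x that is not a shared edge (u and v are not consecutive in π_y), then the subpath of P_y between u and v contains at least one internal vertex, and among the vertices of this subpath there is one that is last in the order π_x; if this vertex is internal to the subpath, it is a switch vertex of P_y. -/

import Mathlib

open Finset

variable {m : ℕ}

/-- First endpoint of the `e`-th edge of the Hamiltonian path induced by `π`. -/
def pFst (π : Equiv.Perm (Fin (m+1))) (e : Fin m) : Fin (m+1) := π e.castSucc

/-- Second endpoint of the `e`-th edge of the Hamiltonian path induced by `π`. -/
def pSnd (π : Equiv.Perm (Fin (m+1))) (e : Fin m) : Fin (m+1) := π e.succ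

/-- Position of vertex `v` along the Hamiltonian path induced by `π`. -/
def pos (π : Equiv.Perm (Fin (m+1))) (v : Fin (m+1)) : ℕ := (π.symm v : ℕ)

/-- Edges `e` and `f = e+1` of `P_x` form a switch pair: both `P_x`-neighbours of the
middle internal vertex `πx e.succ` lie on the same side of it in `π_y`. -/
def SwitchPairX (πx πy : Equiv.Perm (Fin (m+1))) (e f : Fin m) : Prop :=
  (e : ℕ) + 1 = (f : ℕ) ∧
    ((pos πy (pFst πx e) < pos πy (pSnd πx e) ∧ pos πy (pSnd πx f) < pos πy (pSnd πx e)) ∨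
     (pos πy (pSnd πx e) < pos πy (pFst πx e) ∧ pos πy (pSnd πx e) < pos πy (pSnd πx f)))

/-- Switch pairs of `P_y`: the same with the roles of the permutations swapped. -/
def SwitchPairY (πx πy : Equiv.Perm (Fin (m+1))) (e f : Fin m) : Prop :=
  SwitchPairX πy πx e f

/-- The `P_x`-edge `e` and the `P_y`-edge `f` have the same (unordered) pair of endpoints. -/
def SharedEdge (πx πy : Equiv.Perm (Fin (m+1))) (e f : Fin m) : Prop :=
  (pFst πx e = pFst πy f ∧ pSnd πx e = pSnd πy f) ∨
  (pFst πx e = pSnd πy f ∧ pSnd πx e = pFst πy f)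

/-- Alignment of the `P_x`-edge `e`: positive (`True`) iff its endpoints appear in the
same relative order in `π_x` and `π_y`. -/
def AlignX (πx πy : Equiv.Perm (Fin (m+1))) (e : Fin m) : Prop :=
  pos πy (pFst πx e) < pos πy (pSnd πx e)

/-- Alignment of the `P_y`-edge `e`. -/
def AlignY (πx πy : Equiv.Perm (Fin (m+1))) (e : Fin m) : Prop :=
  pos πx (pFst πy e) < pos πx (pSnd πy e)


/-- `v` is a switch vertex of `P_y`: it is the middle vertex of a switch pair of `P_y`. -/
def IsSwitchVertexY (πx πy : Equiv.Perm (Fin (m+1))) (v : Fin (m+1)) : Prop :=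
  ∃ e f : Fin m, SwitchPairY πx πy e f ∧ pSnd πy e = v

/-- if the `P_x`-edge `e` is not a shared edge (its endpoints are not
consecutive in `π_y`), then the subpath of `P_y` between its endpoints contains an
internal vertex, and among the vertices of the subpath there is a last one in the
order `π_x`; if that vertex is internal to the subpath, it is a switch vertex of `P_y`. -/
theorem nonshared_edge_switch {m : ℕ} (πx πy : Equiv.Perm (Fin (m+1))) (e : Fin m)
    (hns : ¬ (pos πy (pFst πx e) + 1 = pos πy (pSnd πx e) ∨
              pos πy (pSnd πx e) + 1 = pos πy (pFst πx e))) :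
    (∃ z : Fin (m+1),
        min (pos πy (pFst πx e)) (pos πy (pSnd πx e)) < pos πy z ∧
        pos πy z < max (pos πy (pFst πx e)) (pos πy (pSnd πx e))) ∧
    ∃ z : Fin (m+1),
      (min (pos πy (pFst πx e)) (pos πy (pSnd πx e)) ≤ pos πy z ∧
        pos πy z ≤ max (pos πy (pFst πx e)) (pos πy (pSnd πx e))) ∧
      (∀ u : Fin (m+1),
        (min (pos πy (pFst πx e)) (pos πy (pSnd πx e)) ≤ pos πy u ∧
          pos πy u ≤ max (pos πy (pFst πx e)) (pos πy (pSnd πx e))) →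
        u ≠ z → pos πx u < pos πx z) ∧
      ((min (pos πy (pFst πx e)) (pos πy (pSnd πx e)) < pos πy z ∧
          pos πy z < max (pos πy (pFst πx e)) (pos πy (pSnd πx e))) →
        IsSwitchVertexY πx πy z) := by
  set a := pFst πx e with ha
  set b := pSnd πx e with hb
  set p := pos πy a with hp
  set q := pos πy b with hq
  have hposy_inj : ∀ u v : Fin (m+1), pos πy u = pos πy v → u = v := by
    intro u v h
    have : πy.symm u = πy.symm v := Fin.ext h
    exact πy.symm.injective this
  have hab : a ≠ b := by
    simp only [ha, hb, pFst, pSnd]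
    intro h
    have := πx.injective h
    exact absurd this (Fin.castSucc_lt_succ (i := e)).ne
  have hpq : p ≠ q := fun h => hab (hposy_inj a b h)
  have hpm : p ≤ m := by
    have : (πy.symm a : ℕ) < m + 1 := (πy.symm a).isLt
    simpa [hp, pos] using Nat.lt_succ_iff.mp this
  have hqm : q ≤ m := by
    have : (πy.symm b : ℕ) < m + 1 := (πy.symm b).isLt
    simpa [hq, pos] using Nat.lt_succ_iff.mp this
  have hlohi : min p q + 1 < max p q := by
    rcases lt_or_gt_of_ne hpq with h | h
    · have h1 : p + 1 ≠ q := fun hc => hns (Or.inl hc)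
      omega
    · have h2 : q + 1 ≠ p := fun hc => hns (Or.inr hc)
      omega
  have hhim : max p q ≤ m := by omega
  constructor
  · refine ⟨πy ⟨min p q + 1, by omega⟩, ?_, ?_⟩
    · simp only [pos, Equiv.symm_apply_apply]; omega
    · simp only [pos, Equiv.symm_apply_apply]; omega
  · -- the maximum
    set S : Finset (Fin (m+1)) :=
      Finset.univ.filter (fun u => min p q ≤ pos πy u ∧ pos πy u ≤ max p q) with hS
    have haS : a ∈ S := by
      simp only [hS, Finset.mem_filter, Finset.mem_univ, true_and]
      constructor <;> omega
    obtain ⟨z, hzS, hzmax⟩ := Finset.exists_max_image S (pos πx) ⟨a, haS⟩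
    have hzmem : min p q ≤ pos πy z ∧ pos πy z ≤ max p q := by
      simpa [hS] using hzS
    have hstrict : ∀ u : Fin (m+1),
        (min p q ≤ pos πy u ∧ pos πy u ≤ max p q) → u ≠ z → pos πx u < pos πx z := by
      intro u hu hne
      have hle : pos πx u ≤ pos πx z := hzmax u (by
        simp only [hS, Finset.mem_filter, Finset.mem_univ, true_and]; exact hu)
      rcases lt_or_eq_of_le hle with h | h
      · exact h
      · exfalso
        apply hne
        exact πx.symm.injective (Fin.ext h)
    refine ⟨z, hzmem, hstrict, ?_⟩
    intro ⟨hlt1, hlt2⟩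
    set k := pos πy z with hk
    have hk1 : 1 ≤ k := by omega
    have hkm : k < m := by omega
    have hsymm : (πy.symm z : ℕ) = k := rfl
    have hsnd : pSnd πy ⟨k - 1, by omega⟩ = z := by
      have hsucc : (⟨k - 1, by omega⟩ : Fin m).succ = πy.symm z := by
        ext
        simp only [Fin.val_succ, hsymm]
        omega
      simp [pSnd, hsucc]
    refine ⟨⟨k - 1, by omega⟩, ⟨k, hkm⟩, ⟨by simp; omega, ?_⟩, ?_⟩
    · left
      rw [hsnd]
      have hu1 : pFst πy ⟨k - 1, by omega⟩ = πy ⟨k - 1, by omega⟩ := by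
        simp only [pFst]
        congr 1
      have hu2 : pSnd πy ⟨k, hkm⟩ = πy ⟨k + 1, by omega⟩ := by
        simp only [pSnd]
        congr 1
      constructor
      · rw [hu1]
        apply hstrict
        · simp [pos]; omega
        · intro hc
          have : (k - 1 : ℕ) = k := by
            have := congrArg (pos πy) hc
            simpa [pos, hk] using this
          omega
      · rw [hu2]
        apply hstrict
        · simp [pos]; omega
        · intro hc
          have : (k + 1 : ℕ) = k := by
            have := congrArg (pos πy) hc
            simp only [pos, Equiv.symm_apply_apply] at this
            omega
          omega
    · exact hsnd
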